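/- Let t_j(x) = (1/j)(x_1^j + ⋯ + x_n^j) for j = 1,…,r be the normalized power sums in variables x_1,…,x_n. Then the coefficient of x_1^r x_2^r ⋯ x_n^r in the monomial t_1(x)^{k_1} t_2(x)^{k_2} ⋯ t_r(x)^{k_r} equals the coefficient of u_1^{k_1}⋯u_r^{k_r}/(k_1!⋯k_r!) in (h_r(u_1, u_2/2,…, u_r/r, 0,…))^n; that is, ∑_{k_1,…,k_r ≥ 0} [x_1^r⋯x_n^r](t_1(x)^{k_1}⋯t_r(x)^{k_r}) ∏_j u_j^{k_j}/k_j! = (h_r(u_1,u_2/2,…,u_r/r,0,…))^n as polynomials in u_1,…,u_r. -/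

import Mathlib

/-- `hpoly k t` is the polynomial `h_k` in the variables `t_1, t_2, …` defined by the
generating function `∑_{k≥0} h_k(t) z^k = exp(∑_{j≥1} t_j z^j)`; concretely it is the
coefficient of `z^k` in `∑_{m=0}^{k} (1/m!) (∑_{j=1}^{k} t_j z^j)^m` (higher terms of the
exponential series, and variables `t_j` with `j > k`, do not contribute to this
coefficient). -/
noncomputable def hpoly (k : ℕ) (t : ℕ → ℂ) : ℂ :=
  Polynomial.coeff
    (∑ m ∈ Finset.range (k + 1),
      ((m.factorial : ℂ)⁻¹) •
        (∑ j ∈ Finset.Icc 1 k, Polynomial.C (t j) * Polynomial.X ^ j) ^ m) k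

/-- The normalized power sum `t_j(x) = (1/j)(x_1^j + ⋯ + x_n^j)` as a polynomial in
`x_1, …, x_n`. -/
noncomputable def npsum (n j : ℕ) : MvPolynomial (Fin n) ℂ :=
  ((j : ℂ))⁻¹ • ∑ i : Fin n, MvPolynomial.X i ^ j

open Finset MvPolynomial

section aux

lemma coeff_prod_eval₂ {n : ℕ} (p : Fin n → Polynomial ℂ) (d : Fin n → ℕ) :
    MvPolynomial.coeff (Finsupp.equivFunOnFinite.symm d)
      (∏ i : Fin n, Polynomial.eval₂ MvPolynomial.C (MvPolynomial.X i) (p i)) =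
    ∏ i : Fin n, (p i).coeff (d i) := by
  set N : Fin n → ℕ := fun i => max ((p i).natDegree + 1) (d i + 1) with hN
  have h1 : ∀ i : Fin n, Polynomial.eval₂ MvPolynomial.C (MvPolynomial.X i) (p i)
      = ∑ a ∈ Finset.range (N i), MvPolynomial.C ((p i).coeff a) * MvPolynomial.X i ^ a := by
    intro i
    exact Polynomial.eval₂_eq_sum_range'
      (MvPolynomial.C) (lt_of_lt_of_le (Nat.lt_succ_self _) (le_max_left _ _)) _
  simp_rw [h1]
  rw [Finset.prod_univ_sum]
  have h2 : ∀ a : Fin n → ℕ,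
      (∏ i : Fin n, (MvPolynomial.C ((p i).coeff (a i)) * MvPolynomial.X i ^ (a i)
        : MvPolynomial (Fin n) ℂ))
      = MvPolynomial.monomial (Finsupp.equivFunOnFinite.symm a) (∏ i, (p i).coeff (a i)) := by
    intro a
    rw [MvPolynomial.monomial_eq, Finset.prod_mul_distrib,
      map_prod (MvPolynomial.C : ℂ →+* MvPolynomial (Fin n) ℂ) _ _,
      Finsupp.prod_fintype _ _ (fun i => pow_zero _)]
    rfl
  simp_rw [h2]
  simp_rw [MvPolynomial.coeff_sum, MvPolynomial.coeff_monomial]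
  have h3 : ∀ a : Fin n → ℕ,
      (Finsupp.equivFunOnFinite.symm a = Finsupp.equivFunOnFinite.symm d) ↔ a = d :=
    fun a => Equiv.apply_eq_iff_eq _
  rw [Finset.sum_congr rfl (fun a _ => by rw [if_congr (h3 a) rfl rfl]),
    Finset.sum_ite_eq' _ d (fun a => ∏ i, (p i).coeff (a i)), if_pos]
  simp only [Fintype.mem_piFinset, Finset.mem_range]
  intro i; exact lt_of_lt_of_le (Nat.lt_succ_self _) (le_max_right _ _)

lemma npsum_isHomogeneous (n j : ℕ) : (npsum n j).IsHomogeneous j := by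
  rw [npsum, MvPolynomial.smul_eq_C_mul]
  exact (MvPolynomial.IsHomogeneous.sum _ _ _
    (fun i _ => MvPolynomial.isHomogeneous_X_pow i j)).C_mul _

lemma prod_npsum_isHomogeneous (r n : ℕ) (k : Fin r → ℕ) :
    (∏ j : Fin r, npsum n ((j : ℕ) + 1) ^ k j).IsHomogeneous
      (∑ j : Fin r, ((j : ℕ) + 1) * k j) :=
  MvPolynomial.IsHomogeneous.prod _ _ _ (fun j _ => (npsum_isHomogeneous n _).pow _)

lemma degree_const_r (r n : ℕ) :
    (Finsupp.equivFunOnFinite.symm fun _ : Fin n => r).degree = n * r := by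
  rw [Finsupp.degree_apply, Finset.sum_subset (Finset.subset_univ _)]
  · simp [Finset.card_univ, mul_comm]
  · intro x _ hx
    by_contra h
    exact hx (Finsupp.mem_support_iff.2 (by simpa using h))

lemma genDouble {ι : Type*} [Fintype ι] [DecidableEq ι] (M : ℕ) (F : (ι → ℕ) → ℂ) :
    ∑ m ∈ Finset.range (M + 1), ∑ k ∈ Finset.piAntidiag (Finset.univ : Finset ι) m, F k =
    ∑ k ∈ Fintype.piFinset (fun _ : ι => Finset.range (M + 1)),
      if (∑ i, k i) ≤ M then F k else 0 := by
  rw [← Finset.sum_biUnion (by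
    intro m₁ _ m₂ _ hne
    dsimp [Function.onFun]
    rw [Finset.disjoint_left]
    intro k h1 h2
    rw [Finset.mem_piAntidiag] at h1 h2
    exact hne (h1.1 ▸ h2.1 ▸ rfl))]
  have hset : (Finset.range (M + 1)).biUnion (fun m => Finset.piAntidiag Finset.univ m)
      = (Fintype.piFinset fun _ : ι => Finset.range (M + 1)).filter
          (fun k => ∑ i, k i ≤ M) := by
    ext k
    simp only [Finset.mem_biUnion, Finset.mem_range, Finset.mem_piAntidiag,
      Finset.mem_filter, Fintype.mem_piFinset, Finset.mem_range]
    constructor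
    · rintro ⟨m, hm, hsum, -⟩
      have hs' : ∑ i, k i = m := hsum
      have hle : ∑ i, k i ≤ M := by omega
      exact ⟨fun i => Nat.lt_succ_of_le (le_trans
        (Finset.single_le_sum (fun _ _ => Nat.zero_le _) (Finset.mem_univ i)) hle), hle⟩
    · rintro ⟨-, hle⟩
      exact ⟨∑ i, k i, Nat.lt_succ_of_le hle, rfl, fun _ _ => Finset.mem_univ _⟩
  rw [hset, Finset.sum_filter]

noncomputable def apoly (r : ℕ) (u : ℕ → ℂ) : Polynomial ℂ :=
  ∑ j ∈ Finset.Icc 1 r, Polynomial.C (u j / (j : ℂ)) * Polynomial.X ^ j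

lemma apoly_coeff_zero (r : ℕ) (u : ℕ → ℂ) : (apoly r u).coeff 0 = 0 := by
  rw [apoly, Polynomial.finset_sum_coeff]
  apply Finset.sum_eq_zero
  intro j hj
  rw [Polynomial.coeff_C_mul, Polynomial.coeff_X_pow, if_neg, mul_zero]
  have := (Finset.mem_Icc.1 hj).1
  omega

lemma apoly_pow_coeff (r c : ℕ) (u : ℕ → ℂ) (h : r < c) :
    ((apoly r u) ^ c).coeff r = 0 := by
  obtain ⟨q, hq⟩ := Polynomial.X_dvd_iff.2 (apoly_coeff_zero r u)
  rw [hq, mul_pow, mul_comm, Polynomial.coeff_mul_X_pow', if_neg (by omega)]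

lemma hpoly_eq (r : ℕ) (u : ℕ → ℂ) :
    hpoly r (fun j => u j / (j : ℂ)) =
      ∑ m ∈ Finset.range (r + 1), ((m.factorial : ℂ))⁻¹ * ((apoly r u) ^ m).coeff r := by
  rw [hpoly, Polynomial.finset_sum_coeff]
  exact Finset.sum_congr rfl fun m _ => by rw [Polynomial.coeff_smul, smul_eq_mul]; rfl

lemma Qrepr (r n : ℕ) (u : ℕ → ℂ) :
    ∑ j : Fin r, MvPolynomial.C (u ((j : ℕ) + 1)) * npsum n ((j : ℕ) + 1)
      = ∑ i : Fin n, Polynomial.eval₂ MvPolynomial.C (MvPolynomial.X i) (apoly r u) := by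
  have lhs_eq : ∀ j : ℕ, MvPolynomial.C (u j) * npsum n j
      = ∑ i : Fin n, MvPolynomial.C (u j / (j : ℂ)) * MvPolynomial.X i ^ j := by
    intro j
    rw [npsum, MvPolynomial.smul_eq_C_mul, Finset.mul_sum, Finset.mul_sum]
    refine Finset.sum_congr rfl fun i _ => ?_
    rw [← mul_assoc, ← MvPolynomial.C_mul, div_eq_mul_inv]
  simp_rw [lhs_eq]
  rw [Finset.sum_comm]
  refine Finset.sum_congr rfl fun i _ => ?_
  rw [apoly, Polynomial.eval₂_finset_sum]
  have reindex : ∀ f : ℕ → MvPolynomial (Fin n) ℂ,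
      ∑ j : Fin r, f ((j : ℕ) + 1) = ∑ j ∈ Finset.Icc 1 r, f j := by
    intro f
    rw [Fin.sum_univ_eq_sum_range (fun j => f (j + 1)) r,
      show Finset.Icc 1 r = Finset.Ico 1 (r + 1) from (Finset.Ico_add_one_right_eq_Icc 1 r),
      Finset.sum_Ico_eq_sum_range]
    simp [add_comm]
  rw [reindex (fun j => MvPolynomial.C (u j / (j : ℂ)) * MvPolynomial.X i ^ j)]
  refine Finset.sum_congr rfl fun j _ => ?_
  rw [Polynomial.eval₂_mul, Polynomial.eval₂_C, Polynomial.eval₂_X_pow]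

end aux

/-- `∑_{k_1,…,k_r ≥ 0} [x_1^r ⋯ x_n^r](t_1(x)^{k_1} ⋯ t_r(x)^{k_r}) ∏_j u_j^{k_j}/k_j!
  = (h_r(u_1, u_2/2, …, u_r/r, 0, …))^n`
(the sum has only finitely many nonzero terms, so it is taken as a `tsum`; the
variables of the cycle-index side are `u_{j+1}` for `j : Fin r`). -/
theorem stmt_9 (r n : ℕ) (u : ℕ → ℂ) :
    ∑' k : Fin r → ℕ,
      (MvPolynomial.coeff (Finsupp.equivFunOnFinite.symm fun _ : Fin n => r)
          (∏ j : Fin r, npsum n ((j : ℕ) + 1) ^ k j)) *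
        ∏ j : Fin r, u ((j : ℕ) + 1) ^ k j / ((k j).factorial : ℂ) =
    (hpoly r (fun j => u j / (j : ℂ))) ^ n := by
  classical
  set d : Fin n →₀ ℕ := Finsupp.equivFunOnFinite.symm fun _ : Fin n => r with hdd
  have hdeg : d.degree = n * r := degree_const_r r n
  set M := n * r with hM
  set G : (Fin r → ℕ) → ℂ := fun k =>
    (MvPolynomial.coeff d (∏ j : Fin r, npsum n ((j : ℕ) + 1) ^ k j)) *
      ∏ j : Fin r, u ((j : ℕ) + 1) ^ k j / ((k j).factorial : ℂ) with hG
  have hvan : ∀ k : Fin r → ℕ, (∑ j : Fin r, ((j : ℕ) + 1) * k j) ≠ M →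
      MvPolynomial.coeff d (∏ j : Fin r, npsum n ((j : ℕ) + 1) ^ k j) = 0 := by
    intro k hk
    exact (prod_npsum_isHomogeneous r n k).coeff_eq_zero
      (by rw [hdeg]; exact fun h => hk h.symm)
  have hvan' : ∀ k : Fin r → ℕ, M < ∑ j : Fin r, k j → G k = 0 := by
    intro k hk
    have hle : ∑ j : Fin r, k j ≤ ∑ j : Fin r, ((j : ℕ) + 1) * k j :=
      Finset.sum_le_sum fun j _ => Nat.le_mul_of_pos_left _ (Nat.succ_pos _)
    have hne : (∑ j : Fin r, ((j : ℕ) + 1) * k j) ≠ M := by omega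
    rw [hG]
    simp only
    rw [hvan k hne, zero_mul]
  have hbox : ∀ k ∉ Fintype.piFinset (fun _ : Fin r => Finset.range (M + 1)), G k = 0 := by
    intro k hk
    simp only [Fintype.mem_piFinset, Finset.mem_range, not_forall, not_lt] at hk
    obtain ⟨j, hj⟩ := hk
    have h1 : M < k j := by omega
    exact hvan' k (lt_of_lt_of_le h1
      (Finset.single_le_sum (fun _ _ => Nat.zero_le _) (Finset.mem_univ j)))
  rw [tsum_eq_sum hbox]
  -- the middle object
  set Q : MvPolynomial (Fin n) ℂ :=
    ∑ j : Fin r, MvPolynomial.C (u ((j : ℕ) + 1)) * npsum n ((j : ℕ) + 1) with hQ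
  have key : (MvPolynomial.coeff d (∑ m ∈ Finset.range (M + 1),
      ((m.factorial : ℂ))⁻¹ • Q ^ m)) =
      ∑ k ∈ Fintype.piFinset (fun _ : Fin r => Finset.range (M + 1)), G k := by
    rw [MvPolynomial.coeff_sum]
    simp_rw [MvPolynomial.coeff_smul, smul_eq_mul, hQ,
      Finset.sum_pow_eq_sum_piAntidiag, MvPolynomial.coeff_sum, Finset.mul_sum]
    have inner : ∀ m ∈ Finset.range (M + 1), ∀ k ∈ Finset.piAntidiag
        (Finset.univ : Finset (Fin r)) m,
        (m.factorial : ℂ)⁻¹ * MvPolynomial.coeff d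
          ((Nat.multinomial Finset.univ k : MvPolynomial (Fin n) ℂ) *
            ∏ j : Fin r, (MvPolynomial.C (u ((j : ℕ) + 1)) * npsum n ((j : ℕ) + 1)) ^ k j)
        = G k := by
      intro m _ k hk
      obtain ⟨hsum, -⟩ := Finset.mem_piAntidiag.1 hk
      have hfact : (∏ j : Fin r, ((k j).factorial : ℂ))
          * (Nat.multinomial Finset.univ k : ℂ) = (m.factorial : ℂ) := by
        have h := congrArg (Nat.cast : ℕ → ℂ)
          (Nat.multinomial_spec (Finset.univ : Finset (Fin r)) k)
        rw [hsum] at h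
        push_cast at h
        exact h
      have hc : MvPolynomial.coeff d
          ((Nat.multinomial Finset.univ k : MvPolynomial (Fin n) ℂ) *
            ∏ j : Fin r, (MvPolynomial.C (u ((j : ℕ) + 1)) * npsum n ((j : ℕ) + 1)) ^ k j)
          = (Nat.multinomial Finset.univ k : ℂ) *
            ((∏ j : Fin r, u ((j : ℕ) + 1) ^ k j) *
              MvPolynomial.coeff d (∏ j : Fin r, npsum n ((j : ℕ) + 1) ^ k j)) := by
        rw [← MvPolynomial.C_eq_coe_nat]
        simp_rw [mul_pow, ← MvPolynomial.C_pow]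
        rw [Finset.prod_mul_distrib,
          ← map_prod (MvPolynomial.C : ℂ →+* MvPolynomial (Fin n) ℂ) _ _,
          MvPolynomial.coeff_C_mul, MvPolynomial.coeff_C_mul]
      rw [hc, hG]
      simp only
      have h2 : ∏ j : Fin r, u ((j : ℕ) + 1) ^ k j / ((k j).factorial : ℂ)
          = (∏ j : Fin r, u ((j : ℕ) + 1) ^ k j) *
            (∏ j : Fin r, ((k j).factorial : ℂ))⁻¹ := by
        rw [← Finset.prod_inv_distrib, ← Finset.prod_mul_distrib]
        exact Finset.prod_congr rfl fun j _ => div_eq_mul_inv _ _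
      rw [h2]
      have hf0 : (∏ j : Fin r, ((k j).factorial : ℂ)) ≠ 0 :=
        Finset.prod_ne_zero_iff.2 fun j _ => Nat.cast_ne_zero.2 (k j).factorial_ne_zero
      have hm0 : ((m.factorial : ℕ) : ℂ) ≠ 0 := Nat.cast_ne_zero.2 m.factorial_ne_zero
      field_simp
      linear_combination (MvPolynomial.coeff d (∏ j : Fin r, npsum n ((j : ℕ) + 1) ^ k j)
        * ∏ j : Fin r, u ((j : ℕ) + 1) ^ k j) * hfact
    rw [Finset.sum_congr rfl (fun m hm => Finset.sum_congr rfl (fun k hk => inner m hm k hk)),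
      genDouble]
    refine Finset.sum_congr rfl fun k hk => ?_
    split_ifs with h
    · rfl
    · exact (hvan' k (by omega)).symm
  have key2 : (MvPolynomial.coeff d (∑ m ∈ Finset.range (M + 1),
      ((m.factorial : ℂ))⁻¹ • Q ^ m)) = (hpoly r (fun j => u j / (j : ℂ))) ^ n := by
    rw [hQ, Qrepr r n u, MvPolynomial.coeff_sum]
    simp_rw [MvPolynomial.coeff_smul, smul_eq_mul,
      Finset.sum_pow_eq_sum_piAntidiag, MvPolynomial.coeff_sum, Finset.mul_sum]
    have inner2 : ∀ m ∈ Finset.range (M + 1), ∀ c ∈ Finset.piAntidiag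
        (Finset.univ : Finset (Fin n)) m,
        (m.factorial : ℂ)⁻¹ * MvPolynomial.coeff d
          ((Nat.multinomial Finset.univ c : MvPolynomial (Fin n) ℂ) *
            ∏ i : Fin n, (Polynomial.eval₂ MvPolynomial.C (MvPolynomial.X i) (apoly r u)) ^ c i)
        = ∏ i : Fin n, (((c i).factorial : ℂ))⁻¹ * ((apoly r u) ^ c i).coeff r := by
      intro m _ c hc
      obtain ⟨hsum, -⟩ := Finset.mem_piAntidiag.1 hc
      have hfact : (∏ i : Fin n, ((c i).factorial : ℂ))
          * (Nat.multinomial Finset.univ c : ℂ) = (m.factorial : ℂ) := by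
        have h := congrArg (Nat.cast : ℕ → ℂ)
          (Nat.multinomial_spec (Finset.univ : Finset (Fin n)) c)
        rw [hsum] at h
        push_cast at h
        exact h
      have hp : ∀ i : Fin n,
          (Polynomial.eval₂ MvPolynomial.C (MvPolynomial.X i) (apoly r u)) ^ c i
          = Polynomial.eval₂ MvPolynomial.C (MvPolynomial.X i) ((apoly r u) ^ c i) := by
        intro i
        rw [Polynomial.eval₂_pow]
      simp_rw [hp]
      rw [← MvPolynomial.C_eq_coe_nat, MvPolynomial.coeff_C_mul, hdd,
        coeff_prod_eval₂ (fun i => (apoly r u) ^ c i) (fun _ => r)]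
      rw [Finset.prod_mul_distrib, Finset.prod_inv_distrib]
      have hm0 : ((m.factorial : ℕ) : ℂ) ≠ 0 := Nat.cast_ne_zero.2 m.factorial_ne_zero
      have hf0 : (∏ i : Fin n, ((c i).factorial : ℂ)) ≠ 0 :=
        Finset.prod_ne_zero_iff.2 fun i _ => Nat.cast_ne_zero.2 (c i).factorial_ne_zero
      field_simp
      linear_combination (∏ i : Fin n, ((apoly r u) ^ c i).coeff r) * hfact
    rw [Finset.sum_congr rfl (fun m hm => Finset.sum_congr rfl (fun c hc => inner2 m hm c hc)),
      genDouble]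
    have hsub : Fintype.piFinset (fun _ : Fin n => Finset.range (r + 1)) ⊆
        Fintype.piFinset (fun _ : Fin n => Finset.range (M + 1)) := by
      intro c hc
      simp only [Fintype.mem_piFinset, Finset.mem_range] at hc ⊢
      intro i
      have hci := hc i
      have : r ≤ M := by
        rw [hM]
        have : 1 ≤ n := Nat.pos_of_ne_zero (by rintro rfl; exact absurd i.2 (by simp))
        nlinarith
      omega
    have hstep : ∀ c ∈ Fintype.piFinset (fun _ : Fin n => Finset.range (M + 1)),
        (if (∑ i, c i) ≤ M then
          ∏ i : Fin n, (((c i).factorial : ℂ))⁻¹ * ((apoly r u) ^ c i).coeff r else 0)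
        = (if c ∈ Fintype.piFinset (fun _ : Fin n => Finset.range (r + 1)) then
          ∏ i : Fin n, (((c i).factorial : ℂ))⁻¹ * ((apoly r u) ^ c i).coeff r else 0) := by
      intro c _
      by_cases hmem : c ∈ Fintype.piFinset (fun _ : Fin n => Finset.range (r + 1))
      · rw [if_pos hmem, if_pos]
        simp only [Fintype.mem_piFinset, Finset.mem_range] at hmem
        calc ∑ i, c i ≤ ∑ _i : Fin n, r := Finset.sum_le_sum fun i _ => by
              have := hmem i; omega
          _ = n * r := by simp [Finset.card_univ, mul_comm]
      · rw [if_neg hmem]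
        simp only [Fintype.mem_piFinset, Finset.mem_range, not_forall, not_lt] at hmem
        obtain ⟨i, hi⟩ := hmem
        have hzero : ∏ i : Fin n, (((c i).factorial : ℂ))⁻¹ * ((apoly r u) ^ c i).coeff r
            = 0 := by
          apply Finset.prod_eq_zero (Finset.mem_univ i)
          rw [apoly_pow_coeff r (c i) u (by omega), mul_zero]
        rw [hzero]
        simp
    rw [Finset.sum_congr rfl hstep, ← Finset.sum_filter, Finset.filter_mem_eq_inter,
      Finset.inter_eq_right.2 hsub]
    rw [← Finset.prod_univ_sum (fun _ : Fin n => Finset.range (r + 1))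
      (fun _ x => ((x.factorial : ℂ))⁻¹ * ((apoly r u) ^ x).coeff r)]
    rw [Finset.prod_const, Finset.card_univ, Fintype.card_fin, hpoly_eq]
  rw [← key2, ← key]
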